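/- (Theorem 2) Let N ≥ 1, m ≥ 1, and let A, B be subsets of ℤ_N with iv(A) = iv(B). Lift A to ℤ_{Nm} via canonical representatives and take the union of the m transposes by multiples of N: let Ã = {ā + jN : a ∈ A, 0 ≤ j ≤ m−1} ⊆ ℤ_{Nm}, where ā denotes the representative of a in {0,…,N−1} viewed in ℤ_{Nm}, and define B̃ analogously. Then Ã and B̃ are homometric in ℤ_{Nm}: iv(Ã) = iv(B̃). -/
import Mathlib

def iv {M : ℕ} (A : Finset (ZMod M)) (n : ZMod M) : ℕ :=
  ((A ×ˢ A).filter (fun p => p.2 - p.1 = n)).card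

def multiLift (N m : ℕ) (A : Finset (ZMod N)) : Finset (ZMod (N * m)) :=
  (A ×ˢ Finset.range m).image
    (fun p => ((p.1.val : ZMod (N * m)) + (p.2 : ZMod (N * m)) * (N : ZMod (N * m))))

section Aux

variable (N m : ℕ)

noncomputable def π' : ZMod (N*m) →+* ZMod N := ZMod.castHom (dvd_mul_right N m) (ZMod N)

lemma pi_natCast (v : ℕ) : (π' N m) (v : ZMod (N*m)) = (v : ZMod N) := by
  simp [π']

lemma pi_val (hN : 1 ≤ N) (hm : 1 ≤ m) (z : ZMod (N*m)) :
    ((π' N m) z).val = z.val % N := by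
  haveI : NeZero N := ⟨by omega⟩
  haveI : NeZero (N*m) := ⟨by positivity⟩
  have h : (π' N m) z = ((z.val : ℕ) : ZMod N) := by
    rw [π', ZMod.castHom_apply, ← ZMod.natCast_val]
  rw [h, ZMod.val_natCast]

lemma mem_multiLift (hN : 1 ≤ N) (hm : 1 ≤ m) (A : Finset (ZMod N)) (z : ZMod (N*m)) :
    z ∈ multiLift N m A ↔ (π' N m) z ∈ A := by
  haveI : NeZero N := ⟨by omega⟩
  haveI : NeZero (N*m) := ⟨by positivity⟩
  constructor
  · rintro hz
    simp only [multiLift, Finset.mem_image, Finset.mem_product, Finset.mem_range] at hz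
    obtain ⟨⟨a, j⟩, ⟨⟨ha, hj⟩, rfl⟩⟩ := hz
    have h1 : ((a.val : ZMod (N * m)) + (j : ZMod (N * m)) * (N : ZMod (N * m)))
        = ((a.val + j * N : ℕ) : ZMod (N*m)) := by push_cast; ring
    rw [h1, pi_natCast]
    have h2 : ((a.val + j * N : ℕ) : ZMod N) = a := by
      push_cast
      simp [ZMod.natCast_val, ZMod.cast_id, ZMod.natCast_self]
    rwa [h2]
  · intro hz
    simp only [multiLift, Finset.mem_image, Finset.mem_product, Finset.mem_range]
    refine ⟨⟨(π' N m) z, z.val / N⟩, ⟨⟨hz, ?_⟩, ?_⟩⟩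
    · exact Nat.div_lt_of_lt_mul (ZMod.val_lt z)
    · have h1 : ((π' N m) z).val = z.val % N := pi_val N m hN hm z
      have h2 : ((π' N m) z).val + (z.val / N) * N = z.val := by
        rw [h1]; exact Nat.mod_add_div' z.val N
      calc (((π' N m) z).val : ZMod (N*m)) + ((z.val / N : ℕ) : ZMod (N*m)) * (N : ZMod (N*m))
          = ((((π' N m) z).val + (z.val / N) * N : ℕ) : ZMod (N*m)) := by push_cast; ring
        _ = ((z.val : ℕ) : ZMod (N*m)) := congrArg _ h2
        _ = z := by rw [ZMod.natCast_val, ZMod.cast_id]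

lemma iv_multiLift (hN : 1 ≤ N) (hm : 1 ≤ m) (A : Finset (ZMod N)) (n : ZMod (N*m)) :
    iv (multiLift N m A) n = iv A ((π' N m) n) * m := by
  haveI : NeZero N := ⟨by omega⟩
  haveI : NeZero (N*m) := ⟨by positivity⟩
  have hval : ∀ z : ZMod (N*m), ((z.val : ℕ) : ZMod (N*m)) = z := fun z => by
    rw [ZMod.natCast_val, ZMod.cast_id]
  have hrecon : ∀ z : ZMod (N*m),
      ((((π' N m) z).val : ZMod (N*m)) + ((z.val / N : ℕ) : ZMod (N*m)) * (N : ZMod (N*m))) = z := by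
    intro z
    have h1 : ((π' N m) z).val = z.val % N := pi_val N m hN hm z
    have h2 : ((π' N m) z).val + (z.val / N) * N = z.val := by
      rw [h1]; exact Nat.mod_add_div' z.val N
    calc ((((π' N m) z).val : ZMod (N*m)) + ((z.val / N : ℕ) : ZMod (N*m)) * (N : ZMod (N*m)))
        = ((((π' N m) z).val + (z.val / N) * N : ℕ) : ZMod (N*m)) := by push_cast; ring
      _ = ((z.val : ℕ) : ZMod (N*m)) := congrArg _ h2
      _ = z := hval z
  unfold iv
  have hcard : (Finset.filter (fun p => p.2 - p.1 = (π' N m) n) (A ×ˢ A)).card * m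
      = ((Finset.filter (fun p => p.2 - p.1 = (π' N m) n) (A ×ˢ A)) ×ˢ Finset.range m).card := by
    rw [Finset.card_product, Finset.card_range]
  rw [hcard]
  apply Finset.card_bij (fun p _ => (((π' N m) p.1, (π' N m) p.2), p.1.val / N))
  · rintro ⟨x, y⟩ hp
    simp only [Finset.mem_filter, Finset.mem_product] at hp ⊢
    obtain ⟨⟨hx, hy⟩, hxy⟩ := hp
    refine ⟨⟨⟨(mem_multiLift N m hN hm A x).1 hx, (mem_multiLift N m hN hm A y).1 hy⟩, ?_⟩, ?_⟩
    · rw [← map_sub, hxy]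
    · rw [Finset.mem_range]
      exact Nat.div_lt_of_lt_mul (ZMod.val_lt x)
  · rintro ⟨x₁, y₁⟩ h₁ ⟨x₂, y₂⟩ h₂ heq
    simp only [Finset.mem_filter, Finset.mem_product] at h₁ h₂
    simp only [Prod.mk.injEq] at heq
    obtain ⟨⟨hpx, hpy⟩, hdiv⟩ := heq
    have hx : x₁ = x₂ := by
      rw [← hrecon x₁, ← hrecon x₂, hpx, hdiv]
    have hy : y₁ = y₂ := by
      have e1 := h₁.2; have e2 := h₂.2
      have e3 : y₁ - x₁ = y₂ - x₂ := by rw [e1, e2]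
      have e4 : y₁ - x₁ + x₁ = y₂ - x₂ + x₂ := by rw [e3, hx]
      simpa using e4
    exact Prod.ext hx hy
  · rintro ⟨⟨a, b⟩, j⟩ hq
    simp only [Finset.mem_product, Finset.mem_filter, Finset.mem_range] at hq
    obtain ⟨⟨⟨ha, hb⟩, hab⟩, hj⟩ := hq
    set x : ZMod (N*m) := ((a.val + j * N : ℕ) : ZMod (N*m)) with hxdef
    have hxval : x.val = a.val + j * N := by
      rw [hxdef, ZMod.val_natCast_of_lt]
      calc a.val + j * N < N + j * N := by have := ZMod.val_lt a; omega
        _ ≤ N * m := by nlinarith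
    have hpx : (π' N m) x = a := by
      rw [hxdef, pi_natCast]
      push_cast
      simp [ZMod.natCast_val, ZMod.cast_id, ZMod.natCast_self]
    refine ⟨⟨x, x + n⟩, ?_, ?_⟩
    · simp only [Finset.mem_filter, Finset.mem_product]
      refine ⟨⟨(mem_multiLift N m hN hm A x).2 (by rw [hpx]; exact ha),
        (mem_multiLift N m hN hm A (x+n)).2 ?_⟩, by ring⟩
      rw [map_add, hpx]
      rw [show a + (π' N m) n = b by linear_combination -hab]
      exact hb
    · simp only [Prod.mk.injEq]
      refine ⟨⟨hpx, ?_⟩, ?_⟩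
      · rw [map_add, hpx]
        linear_combination -hab
      · rw [hxval]
        rw [Nat.add_mul_div_right _ _ (by omega : 0 < N)]
        have hd : a.val / N = 0 := Nat.div_eq_of_lt (ZMod.val_lt a)
        omega

end Aux

theorem homometric_multiLift (N m : ℕ) (hN : 1 ≤ N) (hm : 1 ≤ m)
    (A B : Finset (ZMod N)) (h : iv A = iv B) :
    iv (multiLift N m A) = iv (multiLift N m B) := by
  funext n
  rw [iv_multiLift N m hN hm A n, iv_multiLift N m hN hm B n, h]
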